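/- arXiv:1504.00563 — 6 statements merged into one kernel-verified Lean document; each statement's English description precedes it below -/
import Mathlib

section
/- If σ ≥ 1, then the Stolz domain S_σ (minus {1}) shifted by 1, i.e. the set {1 - z : z ∈ S_σ, z ≠ 1}, is contained in the closed sector {w ∈ ℂ : |arg w| ≤ arccos(1/σ)}. -/
open Real Set

theorem stmt0 (σ : ℝ) (hσ : 1 ≤ σ) (z : ℂ)
    (hz : z ∈ ({w : ℂ | ‖w‖ < 1 ∧
        ‖1 - w‖ / (1 - ‖w‖) < σ} ∪ {1}))
    (hz1 : z ≠ 1) :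
    1 - z = 0 ∨ |(1 - z).arg| ≤ Real.arccos (1 / σ) := by
  right
  rcases hz with ⟨h1, h2⟩ | hz
  · have hw : (1 : ℂ) - z ≠ 0 := sub_ne_zero.mpr (Ne.symm hz1)
    have habs : 0 < ‖1 - z‖ := norm_pos_iff.mpr hw
    have hσ0 : (0 : ℝ) < σ := lt_of_lt_of_le one_pos hσ
    have hpos : 0 < 1 - ‖z‖ := by linarith
    have h3 : ‖1 - z‖ < σ * (1 - ‖z‖) := by
      rwa [div_lt_iff₀ hpos] at h2
    have hre : 1 - ‖z‖ ≤ (1 - z).re := by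
      have := Complex.re_le_norm z
      simp only [Complex.sub_re, Complex.one_re]
      linarith
    have hcos : 1 / σ ≤ Real.cos ((1 - z).arg) := by
      rw [Complex.cos_arg hw]
      rw [div_le_div_iff₀ hσ0 habs]
      have : 1 * ‖1 - z‖ < (1 - z).re * σ := by calc 1 * ‖1 - z‖ < σ * (1 - ‖z‖) := by linarith
        _ ≤ (1 - z).re * σ := by nlinarith
      exact le_of_lt (by linarith [this])
    have h4 : Real.arccos (Real.cos ((1 - z).arg)) ≤ Real.arccos (1 / σ) := by
      unfold Real.arccos
      have := Real.monotone_arcsin hcos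
      linarith
    have h5 : Real.arccos (Real.cos ((1 - z).arg)) = |(1 - z).arg| := by
      rw [← Real.cos_abs, Real.arccos_cos (abs_nonneg _) (Complex.abs_arg_le_pi _)]
    rwa [h5] at h4
  · exact absurd hz hz1
end

section
/- Let h(λ) = ∑_{n=0}^∞ cₙ λⁿ with cₙ ≥ 0 and ∑ cₙ = 1. Then for each σ ≥ 1, h maps the closure of the Stolz domain S̄_σ into itself. -/
open Finset Filter Topology

private lemma Sset_eq (σ : ℝ) (hσ : 0 < σ) :
    {w : ℂ | ‖w‖ < 1 ∧ ‖1 - w‖ / (1 - ‖w‖) < σ}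
      = {w : ℂ | ‖1 - w‖ + σ * ‖w‖ < σ} := by
  ext w
  simp only [Set.mem_setOf_eq]
  constructor
  · rintro ⟨h1, h2⟩
    have hpos : 0 < 1 - ‖w‖ := by linarith
    have := (div_lt_iff₀ hpos).mp h2
    nlinarith
  · intro h
    have hnn := norm_nonneg (1 - w)
    have hw : ‖w‖ < 1 := by nlinarith
    refine ⟨hw, ?_⟩
    rw [div_lt_iff₀ (by linarith)]
    nlinarith

private lemma convexS (σ : ℝ) (hσ : 0 ≤ σ) :
    Convex ℝ {w : ℂ | ‖1 - w‖ + σ * ‖w‖ < σ} := by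
  have hf : ConvexOn ℝ Set.univ (fun w : ℂ => dist w 1 + σ * ‖w‖) := by
    have h1 := convexOn_dist (1 : ℂ) convex_univ
    have h2 := (convexOn_univ_norm (E := ℂ)).smul hσ
    exact h1.add h2
  have := hf.convex_lt σ
  convert this using 1
  · rfl
  ext w
  simp [Complex.dist_eq, norm_sub_rev w 1]

theorem stmt3 (c : ℕ → ℝ) (hnn : ∀ n, 0 ≤ c n) (hsum : Summable c)
    (h1 : ∑' n, c n = 1) (σ : ℝ) (hσ : 1 ≤ σ) (z : ℂ)
    (hz : z ∈ closure ({w : ℂ | ‖w‖ < 1 ∧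
        ‖1 - w‖ / (1 - ‖w‖) < σ} ∪ {1})) :
    (∑' n, (c n : ℂ) * z ^ n) ∈ closure ({w : ℂ | ‖w‖ < 1 ∧
        ‖1 - w‖ / (1 - ‖w‖) < σ} ∪ {1}) := by
  have hσ0 : (0:ℝ) < σ := lt_of_lt_of_le one_pos hσ
  set S : Set ℂ := {w : ℂ | ‖w‖ < 1 ∧
      ‖1 - w‖ / (1 - ‖w‖) < σ} with hS
  set U : Set ℂ := S ∪ {1} with hU
  -- Convexity of closure U
  have hKconv : Convex ℝ (closure U) := by
    rcases hσ.eq_or_lt with h | h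
    · -- σ = 1 : S is empty
      have hSempty : S = ∅ := by
        ext w
        simp only [hS, Set.mem_setOf_eq, Set.mem_empty_iff_false, iff_false, not_and]
        intro hw
        rw [div_lt_iff₀ (by linarith)]
        intro habs
        have := norm_add_le (1 - w) w
        simp at this
        nlinarith
      rw [hU, hSempty]
      simp only [Set.empty_union]
      rw [closure_singleton]
      exact convex_singleton 1
    · -- σ > 1 : 1 ∈ closure S, so closure U = closure S which is convex
      have h1S : (1 : ℂ) ∈ closure S := by
        refine mem_closure_of_tendsto (f := fun n : ℕ => ((1 - 1/(n+1) : ℝ) : ℂ))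
          (b := atTop) ?_ ?_
        · have : Tendsto (fun n : ℕ => (1 - 1/(n+1) : ℝ)) atTop (𝓝 1) := by
            have := tendsto_one_div_add_atTop_nhds_zero_nat (𝕜 := ℝ)
            simpa using tendsto_const_nhds.sub this
          rw [show (1:ℂ) = ((1:ℝ):ℂ) by norm_cast]
          exact (Complex.continuous_ofReal.tendsto 1).comp this
        · filter_upwards with n
          have hp : (0:ℝ) < 1/(n+1) := by positivity
          have hle : (1:ℝ)/(n+1) ≤ 1 := by
            rw [div_le_one (by positivity)]; linarith [Nat.cast_nonneg (α := ℝ) n]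
          set t : ℝ := 1 - 1/(n+1) with ht
          have ht0 : 0 ≤ t := by rw [ht]; linarith
          have ht1 : t < 1 := by rw [ht]; linarith
          simp only [hS, Set.mem_setOf_eq]
          have habs : ‖(t:ℂ)‖ = t := by
            rw [Complex.norm_real, Real.norm_eq_abs, abs_of_nonneg ht0]
          have habs2 : ‖1 - (t:ℂ)‖ = 1 - t := by
            rw [show (1:ℂ) - (t:ℂ) = ((1 - t : ℝ) : ℂ) by push_cast; ring,
              Complex.norm_real, Real.norm_eq_abs, abs_of_nonneg (by linarith)]
          constructor
          · rw [habs]; exact ht1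
          · rw [habs, habs2, div_self (by linarith)]; exact h
      have hcl : closure U = closure S := by
        rw [hU, closure_union, closure_singleton]
        exact Set.union_eq_self_of_subset_right (Set.singleton_subset_iff.mpr h1S)
      rw [hcl]
      have := convexS σ (le_of_lt hσ0)
      rw [← Sset_eq σ hσ0] at this
      exact this.closure
  -- powers stay in U
  have hpow : ∀ w ∈ U, ∀ n : ℕ, w ^ n ∈ U := by
    rintro w (hw | hw) n
    · cases n with
      | zero => right; simp
      | succ n =>
        left
        obtain ⟨hr, hrat⟩ := hw
        set r : ℝ := ‖w‖ with hrdef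
        have hr0 : 0 ≤ r := norm_nonneg w
        have hs : ‖1 - w‖ < σ * (1 - r) :=
          (div_lt_iff₀ (by linarith)).mp hrat
        have habspow : ‖w ^ (n+1)‖ = r ^ (n+1) := by
          rw [norm_pow]
        have hrp : r ^ (n+1) < 1 := pow_lt_one₀ hr0 hr (Nat.succ_ne_zero n)
        refine ⟨by rw [habspow]; exact hrp, ?_⟩
        rw [habspow, div_lt_iff₀ (by linarith)]
        set G : ℂ := ∑ i ∈ range (n+1), w ^ i with hGdef
        set Gr : ℝ := ∑ i ∈ range (n+1), r ^ i with hGrdef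
        have hid : (1:ℂ) - w ^ (n+1) = (1 - w) * G := by
          have := geom_sum_mul w (n+1)
          rw [hGdef]
          linear_combination this
        have hidr : (1:ℝ) - r ^ (n+1) = (1 - r) * Gr := by
          have := geom_sum_mul r (n+1)
          rw [hGrdef]
          linear_combination this
        have hG : ‖G‖ ≤ Gr := by
          calc ‖G‖ ≤ ∑ i ∈ range (n+1), ‖w ^ i‖ :=
                norm_sum_le _ _
            _ = Gr := by simp [hGrdef, map_pow, hrdef]
        have hGr1 : (1:ℝ) ≤ Gr := by
          have := Finset.single_le_sum (f := fun i => r ^ i)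
            (fun i _ => pow_nonneg hr0 i) (Finset.mem_range.mpr (Nat.succ_pos n))
          simpa [hGrdef] using this
        have e1 : ‖1 - w ^ (n+1)‖ = ‖1 - w‖ * ‖G‖ := by
          rw [hid, norm_mul]
        rw [e1, hidr]
        have k1 : 0 < (σ * (1 - r) - ‖1 - w‖) * Gr :=
          mul_pos (by linarith) (by linarith)
        have k2 : 0 ≤ ‖1 - w‖ * (Gr - ‖G‖) :=
          mul_nonneg (norm_nonneg _) (by linarith)
        nlinarith
    · simp only [Set.mem_singleton_iff] at hw
      subst hw
      right; simp
  -- each z ^ n lies in closure U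
  have hzn : ∀ n : ℕ, z ^ n ∈ closure U := by
    intro n
    have himg : (fun w : ℂ => w ^ n) '' U ⊆ U := by
      rintro x ⟨w, hw, rfl⟩
      exact hpow w hw n
    have h2 : z ^ n ∈ (fun w : ℂ => w ^ n) '' closure U := ⟨z, hz, rfl⟩
    exact closure_mono himg
      (image_closure_subset_closure_image (continuous_pow n) h2)
  -- |z| ≤ 1
  have hzabs : ‖z‖ ≤ 1 := by
    have hsub : U ⊆ Metric.closedBall (0:ℂ) 1 := by
      rintro w (hw | hw)
      · simp [le_of_lt hw.1]
      · simp only [Set.mem_singleton_iff] at hw; subst hw; simp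
    have := closure_minimal hsub Metric.isClosed_closedBall hz
    simpa using this
  -- summability
  have hgsum : Summable (fun n => (c n : ℂ) * z ^ n) := by
    apply Summable.of_norm
    apply hsum.of_nonneg_of_le (fun n => norm_nonneg _)
    intro n
    rw [norm_mul, norm_pow, Complex.norm_real, Real.norm_of_nonneg (hnn n)]
    calc c n * ‖z‖ ^ n ≤ c n * 1 := by
          apply mul_le_mul_of_nonneg_left _ (hnn n)
          exact pow_le_one₀ (norm_nonneg z) hzabs
      _ = c n := mul_one _
  -- finite convex combinations
  have hpartial : ∀ N, ∑ n ∈ range N, c n ≤ 1 := by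
    intro N
    rw [← h1]
    exact Summable.sum_le_tsum (range N) (fun i _ => hnn i) hsum
  have hmemf : ∀ N : ℕ,
      (∑ n ∈ range N, (c n : ℂ) * z ^ n) + ((1 - ∑ n ∈ range N, c n : ℝ) : ℂ)
        ∈ closure U := by
    intro N
    set ww : ℕ → ℝ := fun n => if n < N then c n else 1 - ∑ i ∈ range N, c i with hww
    set y : ℕ → ℂ := fun n => if n < N then z ^ n else 1 with hy
    have h0 : ∀ i ∈ range (N+1), 0 ≤ ww i := by
      intro i _
      by_cases hi : i < N <;> simp [hww, hi]
      · exact hnn i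
      · linarith [hpartial N]
    have hsum1 : ∑ i ∈ range (N+1), ww i = 1 := by
      rw [Finset.sum_range_succ]
      have : ∑ i ∈ range N, ww i = ∑ i ∈ range N, c i :=
        Finset.sum_congr rfl (fun i hi => by simp [hww, Finset.mem_range.mp hi])
      rw [this]
      simp [hww]
    have hmem : ∀ i ∈ range (N+1), y i ∈ closure U := by
      intro i _
      by_cases hi : i < N <;> simp only [hy, hi, if_true, if_false]
      · exact hzn i
      · exact subset_closure (Set.mem_union_right _ rfl)
    have := hKconv.sum_mem h0 hsum1 hmem
    have heq : ∑ i ∈ range (N+1), ww i • y i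
        = (∑ n ∈ range N, (c n : ℂ) * z ^ n) + ((1 - ∑ n ∈ range N, c n : ℝ) : ℂ) := by
      rw [Finset.sum_range_succ]
      congr 1
      · apply Finset.sum_congr rfl
        intro i hi
        have hi' := Finset.mem_range.mp hi
        simp [hww, hy, hi', Complex.real_smul]
      · simp [hww, hy, Complex.real_smul]
    rwa [heq] at this
  -- limit
  have t1 : Tendsto (fun N => ∑ n ∈ range N, (c n : ℂ) * z ^ n) atTop
      (𝓝 (∑' n, (c n : ℂ) * z ^ n)) := hgsum.hasSum.tendsto_sum_nat
  have t2 : Tendsto (fun N => ((1 - ∑ n ∈ range N, c n : ℝ) : ℂ)) atTop (𝓝 0) := by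
    have h := hsum.hasSum.tendsto_sum_nat
    rw [h1] at h
    have h' : Tendsto (fun N => (1 : ℝ) - ∑ n ∈ range N, c n) atTop (𝓝 0) := by
      have := h.const_sub (1:ℝ)
      simpa using this
    rw [show (0:ℂ) = ((0:ℝ):ℂ) by norm_cast]
    exact (Complex.continuous_ofReal.tendsto 0).comp h'
  have tall : Tendsto (fun N => (∑ n ∈ range N, (c n : ℂ) * z ^ n)
      + ((1 - ∑ n ∈ range N, c n : ℝ) : ℂ)) atTop (𝓝 (∑' n, (c n : ℂ) * z ^ n)) := by
    simpa using t1.add t2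
  exact isClosed_closure.mem_of_tendsto tall (Filter.Eventually.of_forall hmemf)
end

section
/- For all z in the open unit disc, min over φ ∈ [0, 2π) of |z - e^{iφ}|/|1 - e^{iφ}| equals (1 - |z|²)/(2|1 - z|). -/
open Real


lemma lb5 (z w : ℂ) (hz : ‖z‖ < 1) (hw : ‖w‖ = 1) (hw1 : w ≠ 1) :
    (1 - ‖z‖ ^ 2) / (2 * ‖1 - z‖) ≤
      ‖z - w‖ / ‖1 - w‖ := by
  have hz1 : z ≠ 1 := by rintro rfl; simp at hz
  have h1z : (1:ℂ) - z ≠ 0 := sub_ne_zero.mpr (Ne.symm hz1)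
  have h1zpos : 0 < ‖1 - z‖ := norm_pos_iff.mpr h1z
  have h1w : (1:ℂ) - w ≠ 0 := sub_ne_zero.mpr (Ne.symm hw1)
  have h1cw : (1:ℂ) - (starRingEnd ℂ) w ≠ 0 := by
    intro h
    apply h1w
    have := congrArg (starRingEnd ℂ) h
    simpa using this
  have hww : w * (starRingEnd ℂ) w = 1 := by
    rw [Complex.mul_conj, ← Complex.sq_norm, hw]; norm_num
  have hzz : z * (starRingEnd ℂ) z = ((‖z‖ : ℂ))^2 := by
    rw [Complex.mul_conj, ← Complex.sq_norm]; push_cast; ring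
  set u : ℂ := (z - w) / (1 - w) with hu
  have hnum : (1 - (starRingEnd ℂ) z) * (z - w) * (1 - (starRingEnd ℂ) w)
      + (1 - z) * ((starRingEnd ℂ) z - (starRingEnd ℂ) w) * (1 - w)
      = (1 - ((‖z‖ : ℂ))^2) * ((1 - w) * (1 - (starRingEnd ℂ) w)) := by
    linear_combination (1 - (starRingEnd ℂ) z - z + ((‖z‖ : ℂ))^2) * hww
      + (w + (starRingEnd ℂ) w - 2) * hzz
  have hid : (1 - (starRingEnd ℂ) z) * u + (starRingEnd ℂ) ((1 - (starRingEnd ℂ) z) * u)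
      = 1 - ((‖z‖ : ℂ))^2 := by
    simp only [hu, map_mul, map_div₀, map_sub, map_one, Complex.conj_conj]
    field_simp
    linear_combination hnum
  have hre : ((1 - (starRingEnd ℂ) z) * u).re = (1 - ‖z‖ ^ 2) / 2 := by
    have h2 := Complex.add_conj ((1 - (starRingEnd ℂ) z) * u)
    rw [hid] at h2
    have h4 : ((1 - ‖z‖ ^ 2 : ℝ) : ℂ)
        = ((2 * ((1 - (starRingEnd ℂ) z) * u).re : ℝ) : ℂ) := by
      push_cast at h2 ⊢; linear_combination h2
    have h5 := Complex.ofReal_inj.mp h4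
    linarith
  have hle : (1 - ‖z‖ ^ 2) / 2 ≤ ‖1 - z‖ * ‖u‖ := by
    have hra := Complex.re_le_norm ((1 - (starRingEnd ℂ) z) * u)
    rw [hre] at hra
    calc (1 - ‖z‖ ^ 2) / 2 ≤ ‖(1 - (starRingEnd ℂ) z) * u‖ := hra
    _ = ‖1 - z‖ * ‖u‖ := by
        rw [norm_mul]
        congr 1
        rw [show (1 : ℂ) - (starRingEnd ℂ) z = (starRingEnd ℂ) (1 - z) by simp]
        exact Complex.norm_conj _
  have habsu : ‖u‖ = ‖z - w‖ / ‖1 - w‖ := by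
    rw [hu, norm_div]
  rw [← habsu, div_le_iff₀ (by positivity)]
  nlinarith [norm_nonneg u]

lemma eq5 (z : ℂ) (hz : ‖z‖ < 1) :
    ∃ w : ℂ, ‖w‖ = 1 ∧ w ≠ 1 ∧
      ‖z - w‖ / ‖1 - w‖
        = (1 - ‖z‖ ^ 2) / (2 * ‖1 - z‖) := by
  have hz1 : z ≠ 1 := by rintro rfl; simp at hz
  have h1z : (1:ℂ) - z ≠ 0 := sub_ne_zero.mpr (Ne.symm hz1)
  have h1zpos : 0 < ‖1 - z‖ := norm_pos_iff.mpr h1z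
  set N : ℂ := 1 + ((‖z‖ : ℂ))^2 - 2 * z with hN
  have habs2 : ‖z‖ ^ 2 = z.re ^ 2 + z.im ^ 2 := by
    rw [Complex.sq_norm, Complex.normSq_apply]; ring
  have habs2' : ‖1 - z‖ ^ 2 = (1 - z.re) ^ 2 + z.im ^ 2 := by
    rw [Complex.sq_norm, Complex.normSq_apply]; simp; ring
  have hNre : N.re = ‖1 - z‖ ^ 2 := by
    rw [habs2']
    simp [hN, ← Complex.ofReal_pow, habs2]
    ring
  have hNrepos : 0 < N.re := by rw [hNre]; positivity
  have hNne : N ≠ 0 := fun h => by rw [h] at hNrepos; simp at hNrepos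
  have hcNne : (starRingEnd ℂ) N ≠ 0 := by simpa using hNne
  have hcN : (starRingEnd ℂ) N = 1 + ((‖z‖ : ℂ))^2 - 2 * (starRingEnd ℂ) z := by
    simp only [hN, map_sub, map_add, map_one, map_mul, map_pow, Complex.conj_ofReal,
      map_ofNat]
  refine ⟨-N / (starRingEnd ℂ) N, ?_, ?_, ?_⟩
  · rw [norm_div, Complex.norm_conj, norm_neg N, div_self (ne_of_gt (norm_pos_iff.mpr hNne))]
  · intro h
    rw [div_eq_one_iff_eq hcNne] at h
    have := congrArg Complex.re h
    simp [Complex.conj_re] at this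
    linarith
  · have hzz : z * (starRingEnd ℂ) z = ((‖z‖ : ℂ))^2 := by
      rw [Complex.mul_conj, ← Complex.sq_norm]; push_cast; ring
    have hzw : z - (-N / (starRingEnd ℂ) N)
        = (1 - ((‖z‖:ℂ))^2) * (1 - z) / (starRingEnd ℂ) N := by
      rw [sub_eq_iff_eq_add, ← add_div, eq_div_iff hcNne, hcN, hN]
      linear_combination (-2 : ℂ) * hzz
    have h1w : (1:ℂ) - (-N / (starRingEnd ℂ) N) = 2 * (N.re : ℂ) / (starRingEnd ℂ) N := by
      rw [sub_eq_iff_eq_add, ← add_div, eq_div_iff hcNne]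
      have hac := Complex.add_conj N
      push_cast at hac
      linear_combination hac
    rw [hzw, h1w, norm_div, norm_div, norm_mul, norm_mul, Complex.norm_conj]
    have h1 : ‖1 - ((‖z‖:ℂ))^2‖ = 1 - ‖z‖ ^ 2 := by
      rw [show (1:ℂ) - ((‖z‖:ℂ))^2 = ((1 - ‖z‖ ^ 2 : ℝ) : ℂ) by push_cast; ring,
        Complex.norm_real, Real.norm_eq_abs, abs_of_nonneg]
      nlinarith [norm_nonneg z]
    have h2 : ‖(N.re : ℂ)‖ = N.re := by
      rw [Complex.norm_real, Real.norm_eq_abs, abs_of_pos hNrepos]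
    have h3 : ‖(2 : ℂ)‖ = 2 := by norm_num
    rw [h1, h2, h3, hNre]
    have hNa : 0 < ‖N‖ := norm_pos_iff.mpr hNne
    field_simp

theorem stmt5 (z : ℂ) (hz : ‖z‖ < 1) :
    IsLeast {q : ℝ | ∃ φ ∈ Set.Ioo (0 : ℝ) (2 * π),
        q = ‖z - Complex.exp ((φ : ℂ) * Complex.I)‖ /
          ‖1 - Complex.exp ((φ : ℂ) * Complex.I)‖}
      ((1 - ‖z‖ ^ 2) / (2 * ‖1 - z‖)) := by
  constructor
  · -- membership
    obtain ⟨w, hw, hw1, heq⟩ := eq5 z hz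
    have hexp : Complex.exp ((w.arg : ℂ) * Complex.I) = w := by
      have := Complex.norm_mul_exp_arg_mul_I w
      rwa [hw, Complex.ofReal_one, one_mul] at this
    have harg0 : w.arg ≠ 0 := by
      intro h
      apply hw1
      rw [← hexp, h]
      simp
    have hlt : w.arg ≤ π := Complex.arg_le_pi w
    have hgt : -π < w.arg := Complex.neg_pi_lt_arg w
    rcases lt_or_gt_of_ne harg0 with hneg | hpos
    · refine ⟨w.arg + 2 * π, ⟨by linarith [Real.pi_pos], by linarith⟩, ?_⟩
      have h2 : Complex.exp (((w.arg + 2 * π : ℝ) : ℂ) * Complex.I) = w := by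
        push_cast
        rw [add_mul, Complex.exp_add, hexp, Complex.exp_two_pi_mul_I, mul_one]
      rw [h2, heq]
    · refine ⟨w.arg, ⟨hpos, by linarith [Real.pi_pos]⟩, ?_⟩
      rw [hexp, heq]
  · -- lower bound
    rintro q ⟨φ, ⟨hφ0, hφ2⟩, rfl⟩
    set w : ℂ := Complex.exp ((φ : ℂ) * Complex.I) with hwdef
    have hw : ‖w‖ = 1 := Complex.norm_exp_ofReal_mul_I φ
    have hw1 : w ≠ 1 := by
      intro h
      rw [show w = Complex.exp ((φ : ℂ) * Complex.I) from hwdef] at h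
      obtain ⟨n, hn⟩ := Complex.exp_eq_one_iff.mp h
      have hn' : (φ : ℂ) * Complex.I = ((n * (2 * π) : ℝ) : ℂ) * Complex.I := by
        rw [hn]; push_cast; ring
      have hφn : φ = n * (2 * π) := by
        have := mul_right_cancel₀ Complex.I_ne_zero hn'
        exact_mod_cast this
      have hπ := Real.pi_pos
      rcases lt_trichotomy (n : ℝ) 1 with h | h | h
      · have : (n : ℝ) ≤ 0 := by exact_mod_cast Int.lt_add_one_iff.mp (by exact_mod_cast h)
        nlinarith
      · rw [hφn, h] at hφ2; linarith
      · nlinarith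
    exact lb5 z w hz hw hw1
end

section
/- Let γ, β ∈ [0, π) with γ + β < π. Then for all z in the closed sector Σ̄_γ and λ in the closed sector Σ̄_β, |z + λ| ≥ cos((γ+β)/2)·(|z| + |λ|). -/
open Real

theorem stmt7 (γ β : ℝ) (hγ : γ ∈ Set.Ico 0 π) (hβ : β ∈ Set.Ico 0 π)
    (hsum : γ + β < π) (z w : ℂ)
    (hz : z = 0 ∨ |z.arg| ≤ γ) (hw : w = 0 ∨ |w.arg| ≤ β) :
    Real.cos ((γ + β) / 2) * (‖z‖ + ‖w‖) ≤
      ‖z + w‖ := by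
  have hz' : |z.arg| ≤ γ := by
    rcases hz with rfl | h
    · simpa [Complex.arg_zero] using hγ.1
    · exact h
  have hw' : |w.arg| ≤ β := by
    rcases hw with rfl | h
    · simpa [Complex.arg_zero] using hβ.1
    · exact h
  set s := γ + β with hs
  have hs0 : 0 ≤ s := add_nonneg hγ.1 hβ.1
  have hcpos : 0 < Real.cos (s / 2) := by
    apply Real.cos_pos_of_mem_Ioo
    constructor <;> [linarith [Real.pi_pos]; linarith]
  have hc1 : Real.cos (s / 2) ≤ 1 := Real.cos_le_one _
  set a := ‖z‖ with ha
  set b := ‖w‖ with hb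
  have ha0 : 0 ≤ a := norm_nonneg z
  have hb0 : 0 ≤ b := norm_nonneg w
  have key : (z * starRingEnd ℂ w).re = a * b * Real.cos (z.arg - w.arg) := by
    conv_lhs => rw [← Complex.norm_mul_exp_arg_mul_I z, ← Complex.norm_mul_exp_arg_mul_I w]
    rw [map_mul, ← Complex.exp_conj, map_mul, Complex.conj_I, Complex.conj_ofReal,
      Complex.conj_ofReal, mul_mul_mul_comm, ← Complex.exp_add]
    have : (↑z.arg * Complex.I + ↑w.arg * -Complex.I) = ↑(z.arg - w.arg) * Complex.I := by
      push_cast; ring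
    rw [this, show (((‖z‖ : ℝ) : ℂ) * ((‖w‖ : ℝ) : ℂ)) = ((a * b : ℝ) : ℂ) by
      rw [ha, hb]; push_cast; ring]
    rw [Complex.re_ofReal_mul, Complex.exp_ofReal_mul_I_re]
  have habs : |z.arg - w.arg| ≤ s :=
    (abs_sub _ _).trans (add_le_add hz' hw')
  have hcos : Real.cos s ≤ Real.cos (z.arg - w.arg) := by
    rw [← Real.cos_abs (z.arg - w.arg)]
    exact Real.cos_le_cos_of_nonneg_of_le_pi (abs_nonneg _) (le_of_lt hsum) habs
  have hhalf : Real.cos s = 2 * (Real.cos (s / 2)) ^ 2 - 1 := by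
    have := Real.cos_sq (s / 2)
    have h2 : 2 * (s / 2) = s := by ring
    rw [h2] at this
    linarith
  have hsq : (Real.cos (s / 2) * (a + b)) ^ 2 ≤ (‖z + w‖) ^ 2 := by
    rw [Complex.sq_norm, Complex.normSq_add, ← Complex.sq_norm z, ← Complex.sq_norm w, key, ← ha, ← hb]
    nlinarith [mul_nonneg (mul_nonneg ha0 hb0) (sub_nonneg.2 hcos),
      mul_nonneg (by nlinarith [hcpos.le, hc1] : (0:ℝ) ≤ 1 - Real.cos (s / 2) ^ 2)
        (sq_nonneg (a - b)), hhalf]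
  nlinarith [hsq, norm_nonneg (z + w), mul_nonneg hcpos.le (add_nonneg ha0 hb0)]
end

section
/- Let R > 0, β ∈ (-π/2, π/2), and set b = cos β/(1 + R²). Then for all r ∈ (0, R): (i) |(1 - re^{iβ})/(1 + re^{iβ})| ≤ (1 - br)/(1 + br), and (ii) |1 + re^{iβ}|² ≥ (1 + br)². -/
set_option maxHeartbeats 1000000


open Real

theorem stmt9 (R β : ℝ) (hR : 0 < R) (hβ : β ∈ Set.Ioo (-(π / 2)) (π / 2))
    (b : ℝ) (hb : b = Real.cos β / (1 + R ^ 2)) (r : ℝ) (hr : r ∈ Set.Ioo 0 R) :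
    ‖(1 - (r : ℂ) * Complex.exp ((β : ℂ) * Complex.I)) /
        (1 + (r : ℂ) * Complex.exp ((β : ℂ) * Complex.I))‖ ≤ (1 - b * r) / (1 + b * r) ∧
    (1 + b * r) ^ 2 ≤
      ‖1 + (r : ℂ) * Complex.exp ((β : ℂ) * Complex.I)‖ ^ 2 := by
  obtain ⟨hr0, hrR⟩ := hr
  have hc : 0 < Real.cos β := Real.cos_pos_of_mem_Ioo hβ
  have hc1 : Real.cos β ≤ 1 := Real.cos_le_one β
  have hR2 : (1 : ℝ) < 1 + R ^ 2 := by nlinarith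
  have hb0 : 0 < b := by rw [hb]; positivity
  have hbc : b ≤ Real.cos β := by
    rw [hb]
    rw [div_le_iff₀ (by linarith)]
    nlinarith
  have hb1 : b ≤ 1 := hbc.trans hc1
  have hbr1 : b * r < 1 := by
    rw [hb, div_mul_eq_mul_div, div_lt_one (by linarith)]
    nlinarith [sq_nonneg (R - 1), mul_le_of_le_one_left hr0.le hc1]
  have hbr0 : 0 < 1 + b * r := by nlinarith
  set c := Real.cos β with hcdef
  set s := Real.sin β with hsdef
  have hcs : s ^ 2 + c ^ 2 = 1 := Real.sin_sq_add_cos_sq β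
  have hexp : Complex.exp ((β : ℂ) * Complex.I) = (c : ℂ) + (s : ℂ) * Complex.I := by
    rw [Complex.exp_mul_I, ← Complex.ofReal_cos, ← Complex.ofReal_sin]
  have h1 : ‖1 + (r : ℂ) * Complex.exp ((β : ℂ) * Complex.I)‖ ^ 2
      = 1 + 2 * r * c + r ^ 2 := by
    rw [hexp, ← Complex.normSq_eq_norm_sq, Complex.normSq_apply]
    simp [Complex.add_re, Complex.add_im, Complex.mul_re, Complex.mul_im]
    nlinarith [hcs]
  have h2 : ‖1 - (r : ℂ) * Complex.exp ((β : ℂ) * Complex.I)‖ ^ 2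
      = 1 - 2 * r * c + r ^ 2 := by
    rw [hexp, ← Complex.normSq_eq_norm_sq, Complex.normSq_apply]
    simp [Complex.sub_re, Complex.sub_im, Complex.mul_re, Complex.mul_im]
    nlinarith [hcs]
  have habs1pos : 0 < ‖1 + (r : ℂ) * Complex.exp ((β : ℂ) * Complex.I)‖ := by
    have : (0:ℝ) < 1 + 2 * r * c + r ^ 2 := by nlinarith
    nlinarith [norm_nonneg (1 + (r : ℂ) * Complex.exp ((β : ℂ) * Complex.I)), h1]
  constructor
  · rw [norm_div]
    rw [div_le_div_iff₀ habs1pos hbr0]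
    have hL : 0 ≤ ‖1 - (r : ℂ) * Complex.exp ((β : ℂ) * Complex.I)‖ * (1 + b * r) :=
      mul_nonneg (norm_nonneg _) (le_of_lt hbr0)
    have hRpos : 0 ≤ (1 - b * r) * ‖1 + (r : ℂ) * Complex.exp ((β : ℂ) * Complex.I)‖ :=
      mul_nonneg (by linarith) (le_of_lt habs1pos)
    have hkey : b * (1 + r ^ 2) ≤ c := by
      rw [hb, div_mul_eq_mul_div, div_le_iff₀ (by linarith)]
      nlinarith [mul_lt_mul_of_pos_left (show r ^ 2 < R ^ 2 by nlinarith) hc]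
    have hsq : (‖1 - (r : ℂ) * Complex.exp ((β : ℂ) * Complex.I)‖ * (1 + b * r)) ^ 2
        ≤ ((1 - b * r) * ‖1 + (r : ℂ) * Complex.exp ((β : ℂ) * Complex.I)‖) ^ 2 := by
      rw [mul_pow, mul_pow, h1, h2]
      have e1 : r * (b * (1 + r ^ 2)) ≤ r * c := mul_le_mul_of_nonneg_left hkey hr0.le
      have e2 : (0:ℝ) ≤ r * (c * (b * r) ^ 2) := by positivity
      nlinarith [e1, e2]
    exact (pow_le_pow_iff_left₀ hL hRpos two_ne_zero).mp hsq
  · rw [h1]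
    have e1 : b * r ≤ c * r := mul_le_mul_of_nonneg_right hbc hr0.le
    have e2 : b * r ≤ r := mul_le_of_le_one_left hr0.le hb1
    nlinarith [e1, e2, mul_pos hb0 hr0]
end

section
/- For ε ∈ [0, 1), the function g_ε(λ) = ((2-ε)λ - ε)/(2 + ε + ελ) has the power series expansion g_ε(λ) = -ε/(2+ε) + (4/(2+ε)²)·∑_{n=0}^∞ (-1)ⁿ εⁿ λ^{n+1}/(2+ε)ⁿ for |λ| ≤ 1, and the sum of absolute values of its Taylor coefficients equals 1, i.e. ε/(2+ε) + (4/(2+ε)²)·∑_{n=0}^∞ εⁿ/(2+ε)ⁿ = 1. -/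
theorem stmt10 (ε : ℝ) (hε : ε ∈ Set.Ico (0 : ℝ) 1) :
    (∀ z : ℂ, ‖z‖ ≤ 1 →
      ((2 - (ε : ℂ)) * z - (ε : ℂ)) / (2 + (ε : ℂ) + (ε : ℂ) * z) =
        -(ε : ℂ) / (2 + (ε : ℂ)) +
          (4 / (2 + (ε : ℂ)) ^ 2) *
            ∑' n : ℕ, (-1) ^ n * (ε : ℂ) ^ n * z ^ (n + 1) / (2 + (ε : ℂ)) ^ n) ∧
    ε / (2 + ε) + (4 / (2 + ε) ^ 2) * ∑' n : ℕ, ε ^ n / (2 + ε) ^ n = 1 := by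
  obtain ⟨hε0, hε1⟩ := hε
  have h2r : (0:ℝ) < 2 + ε := by linarith
  have h2 : (2 + (ε : ℂ)) ≠ 0 := by
    intro h
    have := congrArg Complex.re h
    simp at this
    linarith
  constructor
  · intro z hz
    set w : ℂ := -(ε : ℂ) * z / (2 + ε) with hwdef
    have habs : ‖(2 + (ε:ℂ))‖ = 2 + ε := by
      rw [show (2 + (ε:ℂ)) = ((2 + ε : ℝ) : ℂ) by push_cast; ring,
        Complex.norm_real, Real.norm_eq_abs, abs_of_pos h2r]
    have hw : ‖w‖ < 1 := by
      have : ‖w‖ = ε * ‖z‖ / (2 + ε) := by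
        simp [hwdef, map_div₀, map_mul, habs,
          abs_of_nonneg hε0]
      rw [this, div_lt_one h2r]
      nlinarith [norm_nonneg z]
    have hgeo : ∑' n : ℕ, w ^ n = (1 - w)⁻¹ := tsum_geometric_of_norm_lt_one hw
    have hrw : ∑' n : ℕ, (-1) ^ n * (ε : ℂ) ^ n * z ^ (n + 1) / (2 + (ε : ℂ)) ^ n
        = z * ∑' n : ℕ, w ^ n := by
      rw [← tsum_mul_left]
      congr 1
      ext n
      rw [hwdef, div_pow, show -(ε:ℂ) * z = (-1) * ((ε:ℂ) * z) by ring,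
        mul_pow, mul_pow]
      ring
    have hd : (2:ℂ) + ε + ε * z ≠ 0 := by
      intro h
      have h1 : ‖(ε:ℂ) * z‖ ≤ ε := by
        rw [norm_mul, Complex.norm_real, Real.norm_eq_abs, abs_of_nonneg hε0]
        nlinarith [norm_nonneg z]
      have h3 : (ε:ℂ) * z = -(2 + ε) := by linear_combination h
      rw [h3, norm_neg, habs] at h1
      linarith
    have hone : (1 : ℂ) - w ≠ 0 := by
      rw [hwdef]
      field_simp
      intro h
      exact hd (by linear_combination (div_eq_zero_iff.mp h).resolve_right h2)
    have h1w : 1 - w = (2 + ↑ε + ↑ε * z) / (2 + ↑ε) := by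
      rw [hwdef]; field_simp; ring
    rw [hrw, hgeo, h1w, inv_div]
    field_simp
    ring
  · have hr : ε / (2 + ε) < 1 := by rw [div_lt_one h2r]; linarith
    have hr0 : 0 ≤ ε / (2 + ε) := div_nonneg hε0 (le_of_lt h2r)
    have hgeo : ∑' n : ℕ, (ε / (2 + ε)) ^ n = (1 - ε / (2 + ε))⁻¹ :=
      tsum_geometric_of_lt_one hr0 hr
    have hrw : ∑' n : ℕ, ε ^ n / (2 + ε) ^ n = ∑' n : ℕ, (ε / (2 + ε)) ^ n := by
      congr 1; ext n; rw [div_pow]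
    rw [hrw, hgeo]
    have hne : 1 - ε / (2 + ε) ≠ 0 := by
      have : 1 - ε / (2 + ε) = 2 / (2 + ε) := by field_simp; ring
      rw [this]; positivity
    field_simp
    ring
end
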